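/- Let A, C > 0 with A ≥ 4C⁴ + 1. Then for all real V > e^(3C/2), one has A·V − (2/3)·V·log V + C·V·log log V ≤ e^(3A/2)·((3/2)·A)^(3C/2). -/

import Mathlib

lemma aux_poly (C t : ℝ) (hC : 0 < C) (ht1 : 1 ≤ t) (h4 : 4*C^4 + 1 ≤ t^4) :
    60*C^2*t + 14*C ≤ 14*t^4 + (105/2)*C^2 := by
  nlinarith [sq_nonneg (t^2 - 2*C^2), sq_nonneg (2*C^2 - t), sq_nonneg (C - 1),
    sq_nonneg (t - 1), sq_nonneg (C*t - t), sq_nonneg (C - t), mul_pos hC hC,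
    sq_nonneg (2*C^2 - 3*t + 1), mul_nonneg (mul_nonneg hC.le hC.le) (sub_nonneg.2 ht1)]

set_option maxHeartbeats 1000000 in
theorem stmt1 (A C : ℝ) (hA : 0 < A) (hC : 0 < C) (hAC : 4 * C^4 + 1 ≤ A) :
    ∀ V : ℝ, Real.exp (3 * C / 2) < V →
      A * V - (2/3) * V * Real.log V + C * V * Real.log (Real.log V)
        ≤ Real.exp (3 * A / 2) * ((3/2) * A) ^ ((3 : ℝ) * C / 2) := by
  intro V hV
  have hV0 : (0:ℝ) < V := lt_trans (Real.exp_pos _) hV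
  obtain ⟨x, hxdef⟩ : ∃ x, x = Real.log V := ⟨_, rfl⟩
  have hxC : 3 * C / 2 < x := by rw [hxdef]; exact (Real.lt_log_iff_exp_lt hV0).2 hV
  have hx0 : 0 < x := by linarith
  have hA1 : 1 ≤ A := by nlinarith [pow_pos hC 4]
  have hCA : C < A := by
    nlinarith [sq_nonneg (2*C^2 - 1/2), sq_nonneg (C - 1/2), sq_nonneg C]
  obtain ⟨L, hL⟩ : ∃ L, L = Real.log ((3/2) * A) := ⟨_, rfl⟩
  have hL0 : 0 ≤ L := by rw [hL]; exact Real.log_nonneg (by linarith)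
  obtain ⟨X, hX⟩ : ∃ X, X = 3 * A / 2 + 3 * C / 2 * L := ⟨_, rfl⟩
  have hX32 : 3 * A / 2 ≤ X := by nlinarith
  have hX0 : 0 < X := by linarith
  -- the RHS equals exp X
  have hRHS : Real.exp (3 * A / 2) * ((3/2) * A) ^ ((3 : ℝ) * C / 2) = Real.exp X := by
    rw [Real.rpow_def_of_pos (by linarith), ← Real.exp_add]
    congr 1
    rw [hX, hL]
    ring
  -- t = A^(1/4)
  obtain ⟨t, htdef⟩ : ∃ t, t = Real.sqrt (Real.sqrt A) := ⟨_, rfl⟩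
  have hsA0 : (0:ℝ) ≤ Real.sqrt A := Real.sqrt_nonneg A
  have hsA1 : (1:ℝ) ≤ Real.sqrt A := by
    calc (1:ℝ) = Real.sqrt 1 := Real.sqrt_one.symm
      _ ≤ Real.sqrt A := Real.sqrt_le_sqrt hA1
  have ht1 : 1 ≤ t := by
    rw [htdef]
    calc (1:ℝ) = Real.sqrt 1 := Real.sqrt_one.symm
      _ ≤ Real.sqrt (Real.sqrt A) := Real.sqrt_le_sqrt hsA1
  have ht4 : t^4 = A := by
    rw [htdef]
    have h1 : Real.sqrt (Real.sqrt A) ^ 2 = Real.sqrt A := Real.sq_sqrt hsA0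
    have h2 : (Real.sqrt A)^2 = A := Real.sq_sqrt hA.le
    nlinarith
  have hlogA : Real.log A ≤ 4 * (t - 1) := by
    have hlt : Real.log t = Real.log A / 4 := by
      rw [htdef, Real.log_sqrt hsA0, Real.log_sqrt hA.le]
      ring
    have h := Real.log_le_sub_one_of_pos (show (0:ℝ) < t by linarith)
    rw [hlt] at h
    linarith
  have hlog32 : Real.log ((3:ℝ)/2) ≤ 1/2 := by
    rw [Real.log_le_iff_le_exp (by norm_num)]
    linarith [Real.add_one_le_exp ((1:ℝ)/2)]
  have hLb : L ≤ 1/2 + 4 * (t - 1) := by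
    rw [hL, Real.log_mul (by norm_num) (ne_of_gt hA)]
    linarith
  -- master polynomial inequality
  have hmaster : 15*C^2*L + 14*C ≤ 14*A := by
    have h4 : 4*C^4 + 1 ≤ t^4 := by rw [ht4]; exact hAC
    have hpoly : 60*C^2*t + 14*C ≤ 14*t^4 + (105/2)*C^2 := aux_poly C t hC ht1 h4
    have h1 : 15*C^2*L ≤ 15*C^2*(1/2 + 4*(t-1)) := by
      apply mul_le_mul_of_nonneg_left hLb
      positivity
    nlinarith [ht4]
  -- log X ≤ L + C*L/A
  have hlogX : Real.log X ≤ L + C*L/A := by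
    have hXeq : X = ((3/2) * A) * ((A + C*L)/A) := by
      rw [hX]; field_simp
    rw [hXeq, Real.log_mul (by positivity) (by positivity), ← hL]
    have h1 : Real.log ((A + C*L)/A) ≤ (A + C*L)/A - 1 :=
      Real.log_le_sub_one_of_pos (by positivity)
    have h2 : (A + C*L)/A - 1 = C*L/A := by field_simp; ring
    rw [h2] at h1
    linarith
  obtain ⟨a, ha⟩ : ∃ a, a = 2/3 - C/X := ⟨_, rfl⟩
  obtain ⟨B, hB⟩ : ∃ B, B = A - C + C * Real.log X := ⟨_, rfl⟩
  have haub : a ≤ 2/3 := by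
    have : 0 < C/X := by positivity
    rw [ha]; linarith
  have ha0 : 0 < a := by
    have h1 : C/X < 2/3 := (div_lt_iff₀ hX0).2 (by nlinarith)
    rw [ha]; linarith
  -- key: B ≤ a * (X + 7/5)
  have hBa : B ≤ a * (X + 7/5) := by
    have hdiv : C^2*L*X/A ≤ (14/15)*X - (7/5)*C := by
      rw [div_le_iff₀ hA]
      nlinarith [mul_le_mul_of_nonneg_right hmaster hX0.le,
        mul_le_mul_of_nonneg_left hX32 hC.le]
    have h2 : a * (X + 7/5) = ((2/3*X - C) * (X + 7/5))/X := by
      rw [ha, eq_div_iff (ne_of_gt hX0)]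
      field_simp
    rw [hB, h2, le_div_iff₀ hX0]
    have h1 : C * Real.log X * X ≤ (C*L + C*(C*L/A)) * X := by
      apply mul_le_mul_of_nonneg_right _ hX0.le
      nlinarith [mul_le_mul_of_nonneg_left hlogX hC.le]
    have h3 : C*(C*L/A)*X = C^2*L*X/A := by ring
    nlinarith [hX]
  -- tangent: bracket ≤ B - a * x
  have hbracket : A - (2/3)*x + C * Real.log x ≤ B - a*x := by
    have hlogx : Real.log x ≤ Real.log X + x/X - 1 := by
      have h1 := Real.log_le_sub_one_of_pos (show 0 < x/X by positivity)
      rw [Real.log_div (ne_of_gt hx0) (ne_of_gt hX0)] at h1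
      linarith
    have h1 : C * Real.log x ≤ C * (Real.log X + x/X - 1) :=
      mul_le_mul_of_nonneg_left hlogx hC.le
    rw [hB, ha]
    have h2 : C * (x/X) = C/X*x := by ring
    linarith
  -- max: exp x * (B - a*x) ≤ a * exp (X + 2/5)
  have hmax : Real.exp x * (B - a*x) ≤ a * Real.exp (X + 2/5) := by
    have h1 : B - a*x ≤ a * ((X + 2/5) + 1 - x) := by
      have he : a*((X + 2/5) + 1 - x) = a*(X + 7/5) - a*x := by ring
      linarith
    have h2 := Real.add_one_le_exp (X + 2/5 - x)
    have h3 : Real.exp x * (a * ((X + 2/5) + 1 - x)) ≤ Real.exp x * (a * Real.exp (X + 2/5 - x)) := by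
      apply mul_le_mul_of_nonneg_left _ (Real.exp_pos x).le
      apply mul_le_mul_of_nonneg_left _ ha0.le
      linarith
    have h4 : Real.exp x * (a * Real.exp (X + 2/5 - x)) = a * Real.exp (X + 2/5) := by
      rw [mul_comm (Real.exp x), mul_assoc, ← Real.exp_add]
      ring_nf
    calc Real.exp x * (B - a*x) ≤ Real.exp x * (a * ((X + 2/5) + 1 - x)) :=
          mul_le_mul_of_nonneg_left h1 (Real.exp_pos x).le
      _ ≤ Real.exp x * (a * Real.exp (X + 2/5 - x)) := h3
      _ = a * Real.exp (X + 2/5) := h4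
  -- final: a * exp(X + 2/5) ≤ exp X
  have hexp25 : Real.exp ((2:ℝ)/5) ≤ 3/2 := by
    have h2 : Real.exp 2 < 7.59375 := by
      have h := Real.exp_one_lt_d9
      have he : Real.exp 2 = Real.exp 1 * Real.exp 1 := by rw [← Real.exp_add]; norm_num
      nlinarith [Real.exp_pos 1]
    by_contra hlt
    push_neg at hlt
    have h5 : Real.exp ((2:ℝ)/5) ^ (5:ℕ) = Real.exp 2 := by
      rw [← Real.exp_nat_mul]
      norm_num
    have h6 : ((3:ℝ)/2)^(5:ℕ) < Real.exp ((2:ℝ)/5)^(5:ℕ) :=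
      pow_lt_pow_left₀ hlt (by norm_num) (by norm_num)
    rw [h5] at h6
    norm_num at h6
    linarith
  have hfin : a * Real.exp (X + 2/5) ≤ Real.exp X := by
    rw [Real.exp_add]
    have h1 : a * (Real.exp X * Real.exp (2/5)) ≤ (2/3) * (Real.exp X * (3/2)) := by
      apply mul_le_mul haub _ (by positivity) (by norm_num)
      exact mul_le_mul_of_nonneg_left hexp25 (Real.exp_pos X).le
    linarith [h1, Real.exp_pos X]
  -- assemble
  have hVx : V = Real.exp x := by rw [hxdef]; exact (Real.exp_log hV0).symm
  rw [hRHS, ← hxdef]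
  calc A * V - (2/3) * V * x + C * V * Real.log x
      = V * (A - (2/3)*x + C * Real.log x) := by ring
    _ ≤ V * (B - a*x) := mul_le_mul_of_nonneg_left hbracket hV0.le
    _ = Real.exp x * (B - a*x) := by rw [← hVx]
    _ ≤ a * Real.exp (X + 2/5) := hmax
    _ ≤ Real.exp X := hfin
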